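/- (Convergence of cyclic Frontal Slice Descent; Theorem 4.1 of the paper, matrix form.) In the matrix FSD setup, if the learning rate α satisfies κ + α · μ · (n−1) < 1, then the approximation error converges to zero: lim_{t→∞} E(t) = lim_{t→∞} ‖X(t) − X*‖_F = 0. -/

import Mathlib

open Matrix Finset Filter

noncomputable def frobNorm {m k : ℕ} (A : Matrix (Fin m) (Fin k) ℝ) : ℝ :=
  Real.sqrt (∑ i, ∑ j, (A i j) ^ 2)

noncomputable def specNorm {m k : ℕ} (A : Matrix (Fin m) (Fin k) ℝ) : ℝ :=
  ‖LinearMap.toContinuousLinearMap (Matrix.toEuclideanLin A)‖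

def idx (n : ℕ) (hn : 0 < n) (a : ℤ) : Fin n :=
  ⟨(a % (n : ℤ)).toNat, by
    have h1 : (0 : ℤ) < (n : ℤ) := by exact_mod_cast hn
    have h2 := Int.emod_nonneg a h1.ne'
    have h3 := Int.emod_lt_of_pos a h1
    omega⟩

noncomputable def kappaFSD {n N K : ℕ} (hn : 0 < n) (α : ℝ)
    (M : Fin n → Matrix (Fin N) (Fin K) ℝ) : ℝ :=
  Finset.univ.sup' (Finset.univ_nonempty_iff.mpr ⟨⟨0, hn⟩⟩)
    fun i => specNorm ((1 : Matrix (Fin K) (Fin K) ℝ) - α • ((M i)ᵀ * M i))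

noncomputable def muFSD {n N K : ℕ} (hn : 2 ≤ n)
    (M : Fin n → Matrix (Fin N) (Fin K) ℝ) : ℝ :=
  ((Finset.univ : Finset (Fin n × Fin n)).filter fun p => p.1 ≠ p.2).sup'
    ⟨(⟨0, by omega⟩, ⟨1, by omega⟩), by
      refine Finset.mem_filter.mpr ⟨Finset.mem_univ _, ?_⟩
      simp [Fin.ext_iff]⟩
    fun p => specNorm ((M p.1)ᵀ * M p.2)

/- ## Auxiliary norm lemmas -/

lemma frobNorm_nonneg {m k : ℕ} (A : Matrix (Fin m) (Fin k) ℝ) : 0 ≤ frobNorm A :=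
  Real.sqrt_nonneg _

lemma specNorm_nonneg {m k : ℕ} (A : Matrix (Fin m) (Fin k) ℝ) : 0 ≤ specNorm A :=
  norm_nonneg _

noncomputable def toE {m k : ℕ} :
    Matrix (Fin m) (Fin k) ℝ →ₗ[ℝ] EuclideanSpace ℝ (Fin m × Fin k) where
  toFun A := (WithLp.equiv 2 _).symm fun p => A p.1 p.2
  map_add' := fun _ _ => rfl
  map_smul' := fun _ _ => rfl

lemma norm_withlp_sq {m : ℕ} (v : Fin m → ℝ) :
    ‖(WithLp.equiv 2 (Fin m → ℝ)).symm v‖ ^ 2 = ∑ i, v i ^ 2 := by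
  rw [EuclideanSpace.norm_eq, Real.sq_sqrt (by positivity)]
  exact Finset.sum_congr rfl fun i _ => by rw [Real.norm_eq_abs, sq_abs]; rfl

lemma frob_eq_toE {m k : ℕ} (A : Matrix (Fin m) (Fin k) ℝ) : frobNorm A = ‖toE A‖ := by
  unfold frobNorm
  rw [EuclideanSpace.norm_eq]
  congr 1
  rw [Fintype.sum_prod_type]
  exact Finset.sum_congr rfl fun i _ => Finset.sum_congr rfl fun j _ => by
    rw [Real.norm_eq_abs, sq_abs]; rfl

lemma frob_smul {m k : ℕ} (c : ℝ) (A : Matrix (Fin m) (Fin k) ℝ) :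
    frobNorm (c • A) = |c| * frobNorm A := by
  rw [frob_eq_toE, frob_eq_toE, _root_.map_smul, norm_smul, Real.norm_eq_abs]

lemma frob_add_le {m k : ℕ} (A B : Matrix (Fin m) (Fin k) ℝ) :
    frobNorm (A + B) ≤ frobNorm A + frobNorm B := by
  rw [frob_eq_toE, frob_eq_toE, frob_eq_toE, map_add]; exact norm_add_le _ _

lemma frob_sum_le {m k : ℕ} {ι : Type*} (s : Finset ι) (f : ι → Matrix (Fin m) (Fin k) ℝ) :
    frobNorm (∑ i ∈ s, f i) ≤ ∑ i ∈ s, frobNorm (f i) := by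
  rw [frob_eq_toE, map_sum]
  refine le_trans (norm_sum_le _ _) (le_of_eq ?_)
  exact Finset.sum_congr rfl fun i _ => (frob_eq_toE _).symm

lemma frob_mul_le {m k p : ℕ} (A : Matrix (Fin m) (Fin k) ℝ) (B : Matrix (Fin k) (Fin p) ℝ) :
    frobNorm (A * B) ≤ specNorm A * frobNorm B := by
  set L := LinearMap.toContinuousLinearMap (Matrix.toEuclideanLin A) with hL
  have key : ∀ j : Fin p, ∑ i, (A * B) i j ^ 2 ≤ specNorm A ^ 2 * ∑ i, B i j ^ 2 := by
    intro j
    set v : EuclideanSpace ℝ (Fin k) := (WithLp.equiv 2 (Fin k → ℝ)).symm (fun i => B i j) with hv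
    have hcol : L v = (WithLp.equiv 2 (Fin m → ℝ)).symm (fun i => (A * B) i j) := by
      ext i
      show (Matrix.toEuclideanLin A v) i = (A * B) i j
      simp [Matrix.toEuclideanLin, Matrix.toLin'_apply]
      show (A.mulVec fun i => B i j) i = _
      simp [Matrix.mulVec, Matrix.mul_apply, dotProduct]
    have h1 : ‖L v‖ ≤ specNorm A * ‖v‖ := L.le_opNorm v
    have h2 := pow_le_pow_left₀ (norm_nonneg (L v)) h1 2
    rw [mul_pow, hcol, norm_withlp_sq] at h2
    rw [hv, norm_withlp_sq] at h2
    exact h2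
  have h3 : frobNorm (A * B) = Real.sqrt (∑ j, ∑ i, (A * B) i j ^ 2) := by
    unfold frobNorm; rw [Finset.sum_comm]
  have h4 : frobNorm B = Real.sqrt (∑ j, ∑ i, B i j ^ 2) := by
    unfold frobNorm; rw [Finset.sum_comm]
  rw [h3, h4]
  have h5 : ∑ j, ∑ i, (A * B) i j ^ 2 ≤ specNorm A ^ 2 * ∑ j, ∑ i, B i j ^ 2 := by
    rw [Finset.mul_sum]; exact Finset.sum_le_sum fun j _ => key j
  refine le_trans (Real.sqrt_le_sqrt h5) (le_of_eq ?_)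
  rw [Real.sqrt_mul (by positivity), Real.sqrt_sq (specNorm_nonneg A)]

/- ## idx lemmas -/

lemma idx_val (n : ℕ) (hn : 0 < n) (a : ℤ) : ((idx n hn a : ℕ) : ℤ) = a % n := by
  have h1 : (0 : ℤ) < (n : ℤ) := by exact_mod_cast hn
  exact Int.toNat_of_nonneg (Int.emod_nonneg a h1.ne')

lemma idx_inj (n : ℕ) (hn : 0 < n) (t : ℤ) :
    Function.Injective (fun i : Fin n => idx n hn (t - (i : ℕ))) := by
  intro i j h
  have h1 := congrArg (fun x : Fin n => ((x : ℕ) : ℤ)) h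
  simp only [idx_val] at h1
  have h2 : (n : ℤ) ∣ ((i : ℕ) : ℤ) - ((j : ℕ) : ℤ) := by
    have hm : (t - (i:ℕ)) ≡ (t - (j:ℕ)) [ZMOD (n:ℤ)] := h1
    have hd := hm.dvd
    have heq : (t - ((j:ℕ):ℤ)) - (t - ((i:ℕ):ℤ)) = ((i:ℕ):ℤ) - ((j:ℕ):ℤ) := by ring
    rwa [heq] at hd
  have hi := i.isLt; have hj := j.isLt
  have h3 : ((i : ℕ) : ℤ) - ((j : ℕ) : ℤ) = 0 := by
    refine Int.eq_zero_of_abs_lt_dvd h2 ?_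
    rw [abs_lt]
    constructor <;> push_cast <;> omega
  ext; omega

lemma idx_sub_ne (n : ℕ) (hn : 0 < n) (t : ℤ) (i : Fin n) (hi : (i : ℕ) ≠ 0) :
    idx n hn (t - (i : ℕ)) ≠ idx n hn t := by
  intro h
  have h1 := congrArg (fun x : Fin n => ((x : ℕ) : ℤ)) h
  simp only [idx_val] at h1
  have : (t - (i:ℕ)) ≡ t [ZMOD (n:ℤ)] := h1
  have h2 := this.dvd
  have heq : t - (t - ((i:ℕ):ℤ)) = ((i:ℕ):ℤ) := by ring
  rw [heq] at h2
  have hi2 := i.isLt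
  have h3 : ((i : ℕ) : ℤ) = 0 := by
    refine Int.eq_zero_of_abs_lt_dvd h2 ?_
    rw [abs_lt]; constructor <;> push_cast <;> omega
  omega

/- ## Main theorem -/

theorem fsd_cyclic_convergence
    {n N K P : ℕ} (hn : 2 ≤ n) (hN : 1 ≤ N) (hK : 1 ≤ K) (hP : 1 ≤ P)
    (M : Fin n → Matrix (Fin N) (Fin K) ℝ)
    (Xstar : Matrix (Fin K) (Fin P) ℝ)
    (B : Matrix (Fin N) (Fin P) ℝ) (hB : B = (∑ i, M i) * Xstar)
    (α : ℝ) (hα : 0 < α)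
    (X : ℤ → Matrix (Fin K) (Fin P) ℝ) (R : ℤ → Matrix (Fin N) (Fin P) ℝ)
    (hX0 : ∀ t : ℤ, t ≤ 0 → X t = 0)
    (hR : ∀ t : ℤ, 0 ≤ t →
      R (t + 1) = B - ∑ i : Fin n, M (idx n (by omega) (t - ((i : ℕ) : ℤ))) * X (t - ((i : ℕ) : ℤ)))
    (hXstep : ∀ t : ℤ, 0 ≤ t →
      X (t + 1) = X t + α • ((M (idx n (by omega) t))ᵀ * R (t + 1)))
    (hrate : kappaFSD (show 0 < n by omega) α M + α * muFSD hn M * ((n : ℝ) - 1) < 1) :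
    Filter.Tendsto (fun t : ℕ => frobNorm (X (t : ℤ) - Xstar)) Filter.atTop (nhds 0) := by
  have hn' : 0 < n := by omega
  set κ := kappaFSD hn' α M with hκdef
  set μ := muFSD hn M with hμdef
  set e : ℤ → ℝ := fun s => frobNorm (X s - Xstar) with he
  set z0 : Fin n := ⟨0, hn'⟩ with hz0
  -- nonnegativity of κ and μ
  have hκle : ∀ i : Fin n,
      specNorm ((1 : Matrix (Fin K) (Fin K) ℝ) - α • ((M i)ᵀ * M i)) ≤ κ := by
    intro i
    rw [hκdef]; unfold kappaFSD
    exact Finset.le_sup' (f := fun i => specNorm ((1 : Matrix (Fin K) (Fin K) ℝ) - α • ((M i)ᵀ * M i))) (Finset.mem_univ i)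
  have hμle : ∀ a b : Fin n, a ≠ b → specNorm ((M a)ᵀ * M b) ≤ μ := by
    intro a b hab
    rw [hμdef]; unfold muFSD
    exact Finset.le_sup' (f := fun p : Fin n × Fin n => specNorm ((M p.1)ᵀ * M p.2))
      (Finset.mem_filter.mpr ⟨Finset.mem_univ (a, b), hab⟩)
  have hκ0 : 0 ≤ κ := le_trans (specNorm_nonneg _) (hκle z0)
  have hμ0 : 0 ≤ μ := by
    refine le_trans (specNorm_nonneg ((M (⟨0, by omega⟩ : Fin n))ᵀ * M (⟨1, by omega⟩ : Fin n))) ?_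
    exact hμle _ _ (by simp [Fin.ext_iff])
  -- the key one-step identity
  have hiden : ∀ t : ℤ, 0 ≤ t →
      X (t + 1) - Xstar =
        ((1 : Matrix (Fin K) (Fin K) ℝ) - α • ((M (idx n hn' t))ᵀ * M (idx n hn' t))) * (X t - Xstar)
        + (-α) • ∑ i ∈ Finset.univ.erase z0,
            (M (idx n hn' t))ᵀ * (M (idx n hn' (t - (i:ℕ))) * (X (t - (i:ℕ)) - Xstar)) := by
    intro t ht
    have hRt : R (t + 1) = - ∑ i : Fin n,
        M (idx n hn' (t - (i:ℕ))) * (X (t - (i:ℕ)) - Xstar) := by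
      rw [hR t ht, hB]
      have hbij : ∑ i : Fin n, M (idx n hn' (t - (i:ℕ))) * Xstar = ∑ j : Fin n, M j * Xstar :=
        Fintype.sum_bijective _ ((Finite.injective_iff_bijective).mp (idx_inj n hn' t)) _ _
          (fun i => rfl)
      rw [Matrix.sum_mul, ← hbij]
      rw [← Finset.sum_sub_distrib, ← Finset.sum_neg_distrib]
      exact Finset.sum_congr rfl fun i _ => by rw [Matrix.mul_sub]; ring_nf; abel
    rw [hXstep t ht, hRt]
    have hsplit : ∑ i : Fin n, (M (idx n hn' t))ᵀ *
          (M (idx n hn' (t - (i:ℕ))) * (X (t - (i:ℕ)) - Xstar))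
        = (M (idx n hn' t))ᵀ * (M (idx n hn' t) * (X t - Xstar))
          + ∑ i ∈ Finset.univ.erase z0, (M (idx n hn' t))ᵀ *
              (M (idx n hn' (t - (i:ℕ))) * (X (t - (i:ℕ)) - Xstar)) := by
      rw [← Finset.add_sum_erase _ _ (Finset.mem_univ z0)]
      congr 2 <;> · show _ = _ ; norm_num [hz0]
    rw [Matrix.mul_neg, smul_neg, Matrix.mul_sum, hsplit]
    rw [Matrix.sub_mul, Matrix.one_mul, Matrix.smul_mul, Matrix.mul_assoc]
    rw [neg_smul, smul_add]
    abel
  -- the one-step inequality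
  have step : ∀ t : ℤ, 0 ≤ t →
      e (t + 1) ≤ κ * e t + α * μ * ∑ i ∈ Finset.univ.erase z0, e (t - (i:ℕ)) := by
    intro t ht
    have h1 : e (t + 1) = frobNorm _ := congrArg frobNorm (hiden t ht)
    rw [h1]
    refine le_trans (frob_add_le _ _) (add_le_add ?_ ?_)
    · refine le_trans (frob_mul_le _ _) ?_
      exact mul_le_mul_of_nonneg_right (hκle _) (frobNorm_nonneg _)
    · rw [frob_smul, abs_neg, abs_of_pos hα]
      rw [mul_assoc]
      refine mul_le_mul_of_nonneg_left ?_ (le_of_lt hα)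
      rw [Finset.mul_sum]
      refine le_trans (frob_sum_le _ _) (Finset.sum_le_sum fun i hi => ?_)
      rw [← Matrix.mul_assoc]
      refine le_trans (frob_mul_le _ _) ?_
      have hine : (i : ℕ) ≠ 0 := by
        intro h0
        exact (Finset.mem_erase.mp hi).1 (Fin.ext (by simpa [hz0] using h0))
      refine mul_le_mul_of_nonneg_right
        (hμle _ _ (Ne.symm (idx_sub_ne n hn' t i hine))) (frobNorm_nonneg _)
  -- geometric decay
  set ρ : ℝ := κ + α * μ * ((n:ℝ) - 1) with hρdef
  have hρ1 : ρ < 1 := hrate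
  have hn1 : (0:ℝ) ≤ (n:ℝ) - 1 := by
    have : (1:ℝ) ≤ (n:ℝ) := by exact_mod_cast (by omega : 1 ≤ n)
    linarith
  have hρ0 : 0 ≤ ρ := add_nonneg hκ0 (mul_nonneg (mul_nonneg hα.le hμ0) hn1)
  set c : ℝ := frobNorm ((0 : Matrix (Fin K) (Fin P) ℝ) - Xstar) with hcdef
  have hc0 : 0 ≤ c := frobNorm_nonneg _
  have hneg : ∀ s : ℤ, s ≤ 0 → e s = c := by
    intro s hs
    show frobNorm (X s - Xstar) = c
    rw [hX0 s hs]
  have bound : ∀ m : ℕ, e ((m:ℤ) - n + 1) ≤ c * ρ ^ (m / n) := by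
    intro m
    induction m using Nat.strong_induction_on with
    | _ m IH =>
      by_cases hm : m < n
      · have ht0 : (m:ℤ) - n + 1 ≤ 0 := by omega
        rw [hneg _ ht0, Nat.div_eq_of_lt hm, pow_zero, mul_one]
      · push_neg at hm
        set u : ℤ := (m:ℤ) - n with hu
        have hu0 : 0 ≤ u := by omega
        have hstep := step u hu0
        have hd := Nat.div_eq_sub_div hn' hm
        set d : ℕ := (m - n) / n with hddef
        have hEu : e u ≤ c * ρ ^ d := by
          have h1 : u = ((m-1:ℕ):ℤ) - n + 1 := by omega
          have h2 := IH (m-1) (by omega)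
          rw [← h1] at h2
          refine le_trans h2 ?_
          refine mul_le_mul_of_nonneg_left (pow_le_pow_of_le_one hρ0 hρ1.le ?_) hc0
          exact Nat.div_le_div_right (by omega)
        have hsum : ∑ i ∈ Finset.univ.erase z0, e (u - (i:ℕ)) ≤ ((n:ℝ) - 1) * (c * ρ ^ d) := by
          have hcard : (Finset.univ.erase z0).card = n - 1 := by
            rw [Finset.card_erase_of_mem (Finset.mem_univ z0), Finset.card_univ, Fintype.card_fin]
          have hterm : ∀ i ∈ Finset.univ.erase z0, e (u - ((i : Fin n):ℕ)) ≤ c * ρ ^ d := by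
            intro i hi
            have hilt : (i:ℕ) < n := i.isLt
            have h1 : u - ((i:ℕ):ℤ) = ((m-1-(i:ℕ):ℕ):ℤ) - n + 1 := by omega
            have h2 := IH (m-1-(i:ℕ)) (by omega)
            rw [← h1] at h2
            refine le_trans h2 ?_
            refine mul_le_mul_of_nonneg_left (pow_le_pow_of_le_one hρ0 hρ1.le ?_) hc0
            exact Nat.div_le_div_right (by omega)
          have hs := Finset.sum_le_card_nsmul (Finset.univ.erase z0)
            (fun i => e (u - ((i : Fin n):ℕ))) (c * ρ ^ d) hterm
          rw [hcard, nsmul_eq_mul] at hs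
          refine le_trans hs (le_of_eq ?_)
          congr 1
          rw [Nat.cast_sub (by omega : 1 ≤ n), Nat.cast_one]
        have hfin : ((m:ℤ) - n + 1) = u + 1 := by omega
        rw [hfin, hd]
        calc e (u+1) ≤ κ * e u + α * μ * ∑ i ∈ Finset.univ.erase z0, e (u - (i:ℕ)) := hstep
          _ ≤ κ * (c * ρ^d) + α * μ * (((n:ℝ)-1) * (c * ρ^d)) := by
              exact add_le_add (mul_le_mul_of_nonneg_left hEu hκ0)
                (mul_le_mul_of_nonneg_left hsum (mul_nonneg hα.le hμ0))
          _ = ρ * (c * ρ^d) := by rw [hρdef]; ring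
          _ = c * ρ^(d+1) := by ring
  have key : ∀ t : ℕ, e (t:ℤ) ≤ c * ρ ^ ((t + n - 1)/n) := by
    intro t
    have h1 : ((t + n - 1 : ℕ):ℤ) - n + 1 = (t:ℤ) := by omega
    have h2 := bound (t + n - 1)
    rwa [h1] at h2
  have hcomp : Tendsto (fun t : ℕ => (t + n - 1)/n) atTop atTop := by
    refine tendsto_atTop_atTop.mpr fun b => ⟨b*n, fun t ht => ?_⟩
    rw [Nat.le_div_iff_mul_le hn']
    omega
  have hpow : Tendsto (fun k : ℕ => c * ρ^k) atTop (nhds 0) := by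
    simpa using (tendsto_pow_atTop_nhds_zero_of_lt_one hρ0 hρ1).const_mul c
  exact squeeze_zero (fun t => frobNorm_nonneg _) key (hpow.comp hcomp)
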